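/- The octahedron with vertices ±e₁, ±e₂, ±(1,1,2) in ℤ³ is a Fano polytope: it is convex, its only non-vertex lattice point is the origin, and the origin is strictly in its interior. -/

import Mathlib

noncomputable def toR (x : Fin 3 → ℤ) : Fin 3 → ℝ := fun i => (x i : ℝ)

/-- A convex lattice polytope (given by its vertex set `V ⊂ ℤ³`) is *Fano* if the only
non-vertex lattice point it contains is the origin, which lies strictly in its interior. -/
def IsFanoPolytope (V : Set (Fin 3 → ℤ)) : Prop :=
  (0 : Fin 3 → ℝ) ∈ interior (convexHull ℝ (toR '' V)) ∧
  ∀ p : Fin 3 → ℤ, toR p ∈ convexHull ℝ (toR '' V) → p = 0 ∨ p ∈ V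

private lemma eq_vec (p : Fin 3 → ℤ) (a b c : ℤ) (h0 : p 0 = a) (h1 : p 1 = b)
    (h2 : p 2 = c) : p = ![a, b, c] := by
  funext i; fin_cases i <;> simpa

set_option maxHeartbeats 1000000 in
theorem octahedron_112_isFano :
    IsFanoPolytope
      ({![1, 0, 0], ![-1, 0, 0], ![0, 1, 0], ![0, -1, 0], ![1, 1, 2], ![-1, -1, -2]} :
        Set (Fin 3 → ℤ)) := by
  set V : Set (Fin 3 → ℤ) :=
    {![1, 0, 0], ![-1, 0, 0], ![0, 1, 0], ![0, -1, 0], ![1, 1, 2], ![-1, -1, -2]} with hV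
  -- the six real vertices
  set z : Fin 6 → (Fin 3 → ℝ) :=
    ![![1, 0, 0], ![-1, 0, 0], ![0, 1, 0], ![0, -1, 0], ![1, 1, 2], ![-1, -1, -2]] with hz
  have hzmem : ∀ i : Fin 6, z i ∈ toR '' V := by
    intro i
    fin_cases i
    · exact ⟨![1, 0, 0], by simp [hV], by funext j; fin_cases j <;> norm_num [toR, hz, Matrix.cons_val_succ]⟩
    · exact ⟨![-1, 0, 0], by simp [hV], by funext j; fin_cases j <;> norm_num [toR, hz, Matrix.cons_val_succ]⟩
    · exact ⟨![0, 1, 0], by simp [hV], by funext j; fin_cases j <;> norm_num [toR, hz, Matrix.cons_val_succ]⟩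
    · exact ⟨![0, -1, 0], by simp [hV], by funext j; fin_cases j <;> norm_num [toR, hz, Matrix.cons_val_succ]⟩
    · exact ⟨![1, 1, 2], by simp [hV], by funext j; fin_cases j <;> norm_num [toR, hz, Matrix.cons_val_succ]⟩
    · exact ⟨![-1, -1, -2], by simp [hV], by funext j; fin_cases j <;> norm_num [toR, hz, Matrix.cons_val_succ]⟩
  constructor
  · -- interior
    rw [mem_interior]
    refine ⟨Metric.ball 0 (1/10), ?_, Metric.isOpen_ball, by simp⟩
    intro v hv
    have hb : ∀ i : Fin 3, |v i| < 1/10 := by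
      intro i
      have h1 : ‖v i‖ ≤ ‖v‖ := norm_le_pi_norm v i
      have h2 : ‖v‖ < 1/10 := by simpa [Metric.mem_ball] using hv
      rw [Real.norm_eq_abs] at h1
      linarith
    have h0 := abs_lt.mp (hb 0)
    have h1 := abs_lt.mp (hb 1)
    have h2 := abs_lt.mp (hb 2)
    set w : Fin 6 → ℝ :=
      ![1/6 + (v 0 - v 2 / 2)/2, 1/6 - (v 0 - v 2 / 2)/2,
        1/6 + (v 1 - v 2 / 2)/2, 1/6 - (v 1 - v 2 / 2)/2,
        1/6 + v 2 / 4, 1/6 - v 2 / 4] with hw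
    have hwnn : ∀ i ∈ Finset.univ, (0:ℝ) ≤ w i := by
      intro i _
      fin_cases i <;> norm_num [hw, Matrix.cons_val_succ] <;> linarith
    have hwsum : ∑ i, w i = 1 := by
      rw [hw]; simp [Fin.sum_univ_succ]; ring
    have := Finset.centerMass_mem_convexHull Finset.univ hwnn (by rw [hwsum]; norm_num)
      (fun i _ => hzmem i)
    have hcm : Finset.univ.centerMass w z = v := by
      rw [Finset.centerMass_eq_of_sum_1 _ _ hwsum]
      rw [hw, hz]
      funext j
      fin_cases j <;>
        simp [Fin.sum_univ_succ, Finset.sum_apply, Pi.smul_apply, smul_eq_mul] <;> ring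
    rwa [hcm] at this
  · -- lattice points
    intro p hp
    set H : Set (Fin 3 → ℝ) :=
      {v | 2*v 0 + 2*v 1 - v 2 ≤ 2 ∧ -(2) ≤ 2*v 0 + 2*v 1 - v 2 ∧
           2*v 0 + 2*v 1 - 3*v 2 ≤ 2 ∧ -(2) ≤ 2*v 0 + 2*v 1 - 3*v 2 ∧
           2*v 0 - 2*v 1 + v 2 ≤ 2 ∧ -(2) ≤ 2*v 0 - 2*v 1 + v 2 ∧
           2*v 0 - 2*v 1 - v 2 ≤ 2 ∧ -(2) ≤ 2*v 0 - 2*v 1 - v 2} with hH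
    have hHconv : Convex ℝ H := by
      intro x hx y hy a b ha hb hab
      obtain ⟨x1, x2, x3, x4, x5, x6, x7, x8⟩ := hx
      obtain ⟨y1, y2, y3, y4, y5, y6, y7, y8⟩ := hy
      have hax : (a • x + b • y) 0 = a * x 0 + b * y 0 := by simp [smul_eq_mul]
      have hay : (a • x + b • y) 1 = a * x 1 + b * y 1 := by simp [smul_eq_mul]
      have haz : (a • x + b • y) 2 = a * x 2 + b * y 2 := by simp [smul_eq_mul]
      refine ⟨?_, ?_, ?_, ?_, ?_, ?_, ?_, ?_⟩ <;> rw [hax, hay, haz] <;>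
        linarith [mul_le_mul_of_nonneg_left x1 ha, mul_le_mul_of_nonneg_left x2 ha,
          mul_le_mul_of_nonneg_left x3 ha, mul_le_mul_of_nonneg_left x4 ha,
          mul_le_mul_of_nonneg_left x5 ha, mul_le_mul_of_nonneg_left x6 ha,
          mul_le_mul_of_nonneg_left x7 ha, mul_le_mul_of_nonneg_left x8 ha,
          mul_le_mul_of_nonneg_left y1 hb, mul_le_mul_of_nonneg_left y2 hb,
          mul_le_mul_of_nonneg_left y3 hb, mul_le_mul_of_nonneg_left y4 hb,
          mul_le_mul_of_nonneg_left y5 hb, mul_le_mul_of_nonneg_left y6 hb,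
          mul_le_mul_of_nonneg_left y7 hb, mul_le_mul_of_nonneg_left y8 hb]
    have hsub : convexHull ℝ (toR '' V) ⊆ H := by
      apply convexHull_min _ hHconv
      rintro x ⟨q, hq, rfl⟩
      simp only [hV, Set.mem_insert_iff, Set.mem_singleton_iff] at hq
      rcases hq with rfl | rfl | rfl | rfl | rfl | rfl <;>
        exact by norm_num [toR, hH, Matrix.cons_val_succ, Matrix.cons_val_two]
    have hpH := hsub hp
    simp only [hH, Set.mem_setOf_eq, toR] at hpH
    obtain ⟨h1, h2, h3, h4, h5, h6, h7, h8⟩ := hpH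
    have i1 : 2*p 0 + 2*p 1 - p 2 ≤ 2 := by exact_mod_cast h1
    have i2 : -2 ≤ 2*p 0 + 2*p 1 - p 2 := by exact_mod_cast h2
    have i3 : 2*p 0 + 2*p 1 - 3*p 2 ≤ 2 := by exact_mod_cast h3
    have i4 : -2 ≤ 2*p 0 + 2*p 1 - 3*p 2 := by exact_mod_cast h4
    have i5 : 2*p 0 - 2*p 1 + p 2 ≤ 2 := by exact_mod_cast h5
    have i6 : -2 ≤ 2*p 0 - 2*p 1 + p 2 := by exact_mod_cast h6
    have i7 : 2*p 0 - 2*p 1 - p 2 ≤ 2 := by exact_mod_cast h7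
    have i8 : -2 ≤ 2*p 0 - 2*p 1 - p 2 := by exact_mod_cast h8
    have hcases : (p 0 = 0 ∧ p 1 = 0 ∧ p 2 = 0) ∨ (p 0 = 1 ∧ p 1 = 0 ∧ p 2 = 0) ∨
        (p 0 = -1 ∧ p 1 = 0 ∧ p 2 = 0) ∨ (p 0 = 0 ∧ p 1 = 1 ∧ p 2 = 0) ∨
        (p 0 = 0 ∧ p 1 = -1 ∧ p 2 = 0) ∨ (p 0 = 1 ∧ p 1 = 1 ∧ p 2 = 2) ∨
        (p 0 = -1 ∧ p 1 = -1 ∧ p 2 = -2) := by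
      set x := p 0 with hx
      set y := p 1 with hy
      set zz := p 2 with hzz
      have bx : -1 ≤ x ∧ x ≤ 1 := by omega
      have by' : -1 ≤ y ∧ y ≤ 1 := by omega
      have bz : -2 ≤ zz ∧ zz ≤ 2 := by omega
      obtain ⟨bx1, bx2⟩ := bx; obtain ⟨by1, by2⟩ := by'; obtain ⟨bz1, bz2⟩ := bz
      interval_cases x <;> interval_cases y <;> interval_cases zz <;> omega
    rcases hcases with ⟨a, b, c⟩ | ⟨a, b, c⟩ | ⟨a, b, c⟩ | ⟨a, b, c⟩ | ⟨a, b, c⟩ |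
      ⟨a, b, c⟩ | ⟨a, b, c⟩
    · left; funext i; fin_cases i <;> simpa
    · right; left; exact eq_vec p _ _ _ a b c
    · right; right; left; exact eq_vec p _ _ _ a b c
    · right; right; right; left; exact eq_vec p _ _ _ a b c
    · right; right; right; right; left; exact eq_vec p _ _ _ a b c
    · right; right; right; right; right; left; exact eq_vec p _ _ _ a b c
    · right; right; right; right; right; right; exact eq_vec p _ _ _ a b c
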